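/- With b* = (n₊ - n₋)/n, the quantity λ_max := ‖Σᵢ max(1 - yᵢb*, 0) yᵢ xᵢ‖_∞ satisfies λ_max = ‖Σᵢ (yᵢ - (n₊ - n₋)/n) xᵢ‖_∞, and for every λ ≥ λ_max, the pair (w, b) = (0, b*) is a global minimizer of h(w,b) + λ‖w‖₁ where h(w,b) = (1/2)Σᵢ max(1 - yᵢ(wᵀxᵢ + b), 0)². -/

import Mathlib

private lemma ptw_ineq (a c : ℝ) :
    max c 0 ^ 2 + 2 * (max c 0 * (a - c)) ≤ max a 0 ^ 2 := by
  rcases le_total c 0 with hc | hc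
  · rw [max_eq_right hc]
    nlinarith [le_max_right a 0, sq_nonneg (max a 0)]
  · rw [max_eq_left hc]
    nlinarith [le_max_left a 0, le_max_right a 0, sq_nonneg (max a 0 - c)]

theorem stmt_17 {N m : ℕ} (x : Fin N → Fin m → ℝ) (y : Fin N → ℝ)
    (hy : ∀ i, y i = 1 ∨ y i = -1)
    (np nm : ℕ)
    (hnp : np = (Finset.univ.filter fun i => y i = 1).card)
    (hnm : nm = (Finset.univ.filter fun i => y i = -1).card)
    (hnp0 : 0 < np) (hnm0 : 0 < nm)
    (bs : ℝ) (hbs : bs = ((np : ℝ) - (nm : ℝ)) / (N : ℝ))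
    (lamMax : ℝ) (hlamMax : lamMax = ‖∑ i, (max (1 - y i * bs) 0 * y i) • x i‖) :
    lamMax = ‖∑ i, (y i - ((np : ℝ) - (nm : ℝ)) / (N : ℝ)) • x i‖ ∧
    ∀ lam : ℝ, lamMax ≤ lam →
      ∀ (w : Fin m → ℝ) (b : ℝ),
        (1/2) * (∑ i, (max (1 - y i * ((∑ j, w j * x i j) + b)) 0)^2) +
            lam * ∑ j, |w j| ≥
        (1/2) * (∑ i, (max (1 - y i * ((∑ j : Fin m, (0:ℝ) * x i j) + bs)) 0)^2) +
            lam * ∑ _j : Fin m, |(0:ℝ)| := by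
  -- basic cardinality bounds
  have hnpN : np ≤ N := by
    rw [hnp]
    simpa using (Finset.card_filter_le Finset.univ (fun i => y i = 1))
  have hnmN : nm ≤ N := by
    rw [hnm]
    simpa using (Finset.card_filter_le Finset.univ (fun i => y i = -1))
  have hN0 : 0 < N := lt_of_lt_of_le hnp0 hnpN
  have hNR : (0:ℝ) < (N:ℝ) := by exact_mod_cast hN0
  have hbs1 : bs ≤ 1 := by
    rw [hbs, div_le_one hNR]
    have : (np:ℝ) ≤ N := by exact_mod_cast hnpN
    have : (0:ℝ) < nm := by exact_mod_cast hnm0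
    linarith
  have hbsm1 : -1 ≤ bs := by
    rw [hbs, le_div_iff₀ hNR]
    have : (nm:ℝ) ≤ N := by exact_mod_cast hnmN
    linarith
  -- pointwise identity
  have key1 : ∀ i, max (1 - y i * bs) 0 * y i = y i - bs := by
    intro i
    rcases hy i with h | h <;> rw [h]
    · rw [max_eq_left (by linarith)]; ring
    · rw [max_eq_left (by linarith)]; ring
  have part1 : lamMax = ‖∑ i, (y i - bs) • x i‖ := by
    rw [hlamMax]
    congr 1
    exact Finset.sum_congr rfl fun i _ => by rw [key1 i]
  -- sum of (y i - bs) is zero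
  have hsy : ∑ i, y i = (np:ℝ) - nm := by
    have hsplit := (Finset.sum_filter_add_sum_filter_not Finset.univ
      (fun i => y i = 1) y).symm
    have hfil : Finset.univ.filter (fun i => ¬ y i = 1)
        = Finset.univ.filter (fun i => y i = -1) := by
      apply Finset.filter_congr
      intro i _
      rcases hy i with h | h <;> simp [h] <;> norm_num
    rw [hsplit, hfil]
    rw [Finset.sum_congr rfl (fun i hi => (Finset.mem_filter.mp hi).2),
        Finset.sum_congr rfl (fun i hi => (Finset.mem_filter.mp hi).2 :
          ∀ i ∈ Finset.univ.filter (fun i => y i = -1), y i = -1)]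
    simp only [Finset.sum_const, nsmul_eq_mul, mul_one, mul_neg]
    rw [hnp, hnm]
    ring
  have key2 : ∑ i, (y i - bs) = 0 := by
    rw [Finset.sum_sub_distrib, Finset.sum_const, Finset.card_univ,
      Fintype.card_fin, hsy, hbs, nsmul_eq_mul]
    field_simp
    ring
  refine ⟨by rw [part1, hbs], ?_⟩
  intro lam hlam w b
  set v : Fin m → ℝ := ∑ i, (y i - bs) • x i with hv
  have hvj : ∀ j, v j = ∑ i, (y i - bs) * x i j := by
    intro j
    rw [hv, Finset.sum_apply]
    simp [Pi.smul_apply, smul_eq_mul]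
  have hnormv : ∀ j, |v j| ≤ lamMax := by
    intro j
    rw [part1]
    exact (norm_le_pi_norm v j : |v j| ≤ ‖v‖)
  have hlam0 : 0 ≤ lam := le_trans (part1 ▸ norm_nonneg _) hlam
  -- abbreviations
  set c : Fin N → ℝ := fun i => 1 - y i * bs with hc
  set A : Fin N → ℝ := fun i => 1 - y i * ((∑ j, w j * x i j) + b) with hA
  -- termwise convexity bound
  have hsum1 : ∑ i, (c i ⊔ 0) ^ 2 + 2 * ∑ i, ((c i ⊔ 0) * (A i - c i))
      ≤ ∑ i, (A i ⊔ 0) ^ 2 := by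
    rw [Finset.mul_sum, ← Finset.sum_add_distrib]
    exact Finset.sum_le_sum fun i _ => ptw_ineq (A i) (c i)
  -- compute the linear term
  have hlin : ∑ i, ((c i ⊔ 0) * (A i - c i)) = -(∑ j, w j * v j) := by
    have h1 : ∀ i, (c i ⊔ 0) * (A i - c i)
        = -((y i - bs) * (∑ j, w j * x i j)) - (y i - bs) * (b - bs) := by
      intro i
      have : (c i ⊔ 0) * y i = y i - bs := key1 i
      calc (c i ⊔ 0) * (A i - c i)
          = ((c i ⊔ 0) * y i) * (-(∑ j, w j * x i j) - (b - bs)) := by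
            rw [hA, hc]; ring
        _ = -((y i - bs) * (∑ j, w j * x i j)) - (y i - bs) * (b - bs) := by
            rw [this]; ring
    rw [Finset.sum_congr rfl (fun i _ => h1 i), Finset.sum_sub_distrib,
      ← Finset.sum_mul, key2]
    have hswap : ∑ i, (y i - bs) * (∑ j, w j * x i j)
        = ∑ j, w j * v j := by
      simp_rw [Finset.mul_sum]
      rw [Finset.sum_comm]
      refine Finset.sum_congr rfl fun j _ => ?_
      rw [hvj, Finset.mul_sum]
      exact Finset.sum_congr rfl fun i _ => by ring
    rw [Finset.sum_neg_distrib, hswap]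
    ring
  have hbound : ∑ j, w j * v j ≤ lam * ∑ j, |w j| := by
    calc ∑ j, w j * v j ≤ ∑ j, |w j| * lam := by
          refine Finset.sum_le_sum fun j _ => ?_
          calc w j * v j ≤ |w j * v j| := le_abs_self _
            _ = |w j| * |v j| := abs_mul _ _
            _ ≤ |w j| * lam :=
                mul_le_mul_of_nonneg_left (le_trans (hnormv j) hlam) (abs_nonneg _)
      _ = lam * ∑ j, |w j| := by rw [← Finset.sum_mul]; ring
  have e1 : ∑ i, (max (1 - y i * ((∑ j : Fin m, (0:ℝ) * x i j) + bs)) 0)^2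
      = ∑ i, (c i ⊔ 0)^2 := by
    refine Finset.sum_congr rfl fun i _ => ?_
    simp [hc]
  have e2 : ∑ i, (max (1 - y i * ((∑ j, w j * x i j) + b)) 0)^2
      = ∑ i, (A i ⊔ 0)^2 := rfl
  have e3 : ∑ _j : Fin m, |(0:ℝ)| = 0 := by simp
  rw [ge_iff_le, e1, e2, e3]
  linarith [hsum1, hbound, hlin]
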